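/- Under the hypotheses of the state-dependent drift proposition (stopping time τ ≥ 1 with E_x[Σ_{k=0}^{τ-1} f(Φ_k)] ≤ V(x) and E_x[V(Φ_τ)] ≤ (1-ε)V(x) for x ∉ C, sup_C f/V < ∞), if additionally sup_{x∈C} { f(x) + E_x[V(Φ_1)] } < ∞, then sup_{x∈C} E_x[ Σ_{k=0}^{τ_C} f(Φ_k) ] < ∞. -/

import Mathlib

open MeasureTheory ENNReal

/-- The natural filtration on the canonical trajectory space `ℕ → X`. -/
noncomputable def natFiltration (X : Type) [MeasurableSpace X] (n : ℕ) :
    MeasurableSpace (ℕ → X) :=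
  MeasurableSpace.comap (fun ω (i : Fin (n + 1)) => ω i) inferInstance

section Aux

variable {X : Type} [MeasurableSpace X]

def shifted (n : ℕ) (ω : ℕ → X) : ℕ → X := fun k => ω (k + n)

lemma measurable_shifted (n : ℕ) : Measurable (shifted (X := X) n) :=
  measurable_pi_lambda _ fun k => measurable_pi_apply (k + n)

lemma shifted_zero (ω : ℕ → X) : shifted 0 ω = ω := funext fun k => rfl

lemma natFiltration_le {n : ℕ} {A : Set (ℕ → X)}
    (hA : MeasurableSet[natFiltration X n] A) : MeasurableSet A := by
  obtain ⟨S, hS, rfl⟩ := MeasurableSpace.measurableSet_comap.mp hA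
  exact (measurable_pi_lambda _ fun i => measurable_pi_apply _) hS

variable (f : X → ℝ) (C : Set X)

noncomputable def trm (m : ℕ) (ω : ℕ → X) : ℝ≥0∞ :=
  Set.indicator {ω' : ℕ → X | ∀ j < m, ω' j ∉ C} (fun ω' => ENNReal.ofReal (f (ω' m))) ω

noncomputable def GN (N : ℕ) (ω : ℕ → X) : ℝ≥0∞ := ∑ m ∈ Finset.range N, trm f C m ω

noncomputable def Gfun (ω : ℕ → X) : ℝ≥0∞ := ∑' m, trm f C m ω

variable {f C}

lemma measurableSet_noC (hC : MeasurableSet C) (m : ℕ) :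
    MeasurableSet {ω' : ℕ → X | ∀ j < m, ω' j ∉ C} := by
  have h : {ω' : ℕ → X | ∀ j < m, ω' j ∉ C}
      = ⋂ j ∈ Finset.range m, (fun ω' : ℕ → X => ω' j) ⁻¹' Cᶜ := by
    ext ω'; simp [Set.mem_iInter]
  rw [h]
  exact MeasurableSet.biInter (Finset.range m).countable_toSet
    fun j _ => (measurable_pi_apply j) hC.compl

lemma measurable_trm (hf : Measurable f) (hC : MeasurableSet C) (m : ℕ) :
    Measurable (trm f C m) :=
  Measurable.indicator (measurable_ofReal.comp (hf.comp (measurable_pi_apply m)))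
    (measurableSet_noC hC m)

lemma measurable_GN (hf : Measurable f) (hC : MeasurableSet C) (N : ℕ) :
    Measurable (GN f C N) :=
  Finset.measurable_sum _ fun m _ => measurable_trm hf hC m

lemma measurable_Gfun (hf : Measurable f) (hC : MeasurableSet C) :
    Measurable (Gfun f C) :=
  Measurable.ennreal_tsum fun m => measurable_trm hf hC m

lemma monotone_GN : Monotone (GN f C) := by
  intro a b hab
  intro ω
  exact Finset.sum_le_sum_of_subset (Finset.range_subset_range.mpr hab)

lemma Gfun_eq_iSup (ω : ℕ → X) : Gfun f C ω = ⨆ N, GN f C N ω :=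
  ENNReal.tsum_eq_iSup_nat

lemma GN_split (t N : ℕ) (ht : 1 ≤ t) (ω : ℕ → X) :
    GN f C (N + 1) ω
      ≤ (∑ k ∈ Finset.range t, ENNReal.ofReal (f (ω k))) + GN f C N (shifted t ω) := by
  have h1 : GN f C (N + 1) ω ≤ ∑ m ∈ Finset.range (t + N), trm f C m ω :=
    Finset.sum_le_sum_of_subset (Finset.range_subset_range.mpr (by omega))
  rw [Finset.sum_range_add] at h1
  refine h1.trans (add_le_add ?_ ?_)
  · exact Finset.sum_le_sum fun k _ => Set.indicator_le_self _ _ ω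
  · refine Finset.sum_le_sum fun i _ => ?_
    unfold trm
    by_cases h : ∀ j < t + i, ω j ∉ C
    · rw [Set.indicator_of_mem (show ω ∈ {ω' : ℕ → X | ∀ j < t + i, ω' j ∉ C} from h),
        Set.indicator_of_mem (show shifted t ω ∈ {ω' : ℕ → X | ∀ j < i, ω' j ∉ C} from
          fun j hj => h (j + t) (by omega))]
      simp [shifted, Nat.add_comm]
    · rw [Set.indicator_of_notMem
        (show ω ∉ {ω' : ℕ → X | ∀ j < t + i, ω' j ∉ C} from h)]
      exact zero_le ..

lemma GN_start_mem {y : X} (hyC : y ∈ C) (N : ℕ) :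
    ∀ ω : ℕ → X, ω 0 = y → GN f C (N + 1) ω = ENNReal.ofReal (f y) := by
  intro ω hω
  show ∑ m ∈ Finset.range (N + 1), trm f C m ω = _
  rw [Finset.sum_range_succ']
  have h0 : trm f C 0 ω = ENNReal.ofReal (f y) := by
    unfold trm
    rw [Set.indicator_of_mem (show ω ∈ {ω' : ℕ → X | ∀ j < 0, ω' j ∉ C} from
      fun j hj => absurd hj (Nat.not_lt_zero j)), hω]
  have hs : ∀ i, trm f C (i + 1) ω = 0 := fun i =>
    Set.indicator_of_notMem (show ω ∉ {ω' : ℕ → X | ∀ j < i + 1, ω' j ∉ C} from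
      fun hmem => hmem 0 (Nat.succ_pos i) (by rw [hω]; exact hyC)) _
  rw [Finset.sum_eq_zero fun i _ => hs i, zero_add, h0]

end Aux
section Core

variable {X : Type} [MeasurableSpace X]
variable (ℙ : X → Measure (ℕ → X))

lemma startAE (hprob : ∀ x, IsProbabilityMeasure (ℙ x))
    (hstart : ∀ x, (ℙ x) {ω | ω 0 = x} = 1) (y : X)
    {g₁ g₂ : (ℕ → X) → ℝ≥0∞} (h₁ : Measurable g₁) (h₂ : Measurable g₂)
    (h : ∀ ω, ω 0 = y → g₁ ω = g₂ ω) : g₁ =ᵐ[ℙ y] g₂ := by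
  haveI := hprob y
  have hm : MeasurableSet {ω : ℕ → X | g₁ ω = g₂ ω} := by
    have he : {ω : ℕ → X | g₁ ω = g₂ ω}
        = {ω | g₁ ω ≤ g₂ ω} ∩ {ω | g₂ ω ≤ g₁ ω} := by
      ext ω; simp [le_antisymm_iff]
    rw [he]
    exact (measurableSet_le h₁ h₂).inter (measurableSet_le h₂ h₁)
  have h1 : ℙ y {ω : ℕ → X | g₁ ω = g₂ ω} = 1 := by
    refine le_antisymm prob_le_one ?_
    calc (1 : ℝ≥0∞) = ℙ y {ω : ℕ → X | ω 0 = y} := (hstart y).symm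
    _ ≤ _ := measure_mono (fun ω hω => h ω hω)
  have h0 : ℙ y {ω : ℕ → X | g₁ ω = g₂ ω}ᶜ = 0 :=
    (prob_compl_eq_zero_iff hm).mpr h1
  rw [Filter.EventuallyEq, ae_iff]
  exact h0

lemma lintegral_start (hprob : ∀ x, IsProbabilityMeasure (ℙ x))
    (hstart : ∀ x, (ℙ x) {ω | ω 0 = x} = 1) (y : X)
    {g : X → ℝ≥0∞} (hg : Measurable g) :
    ∫⁻ ω, g (ω 0) ∂ℙ y = g y := by
  haveI := hprob y
  rw [lintegral_congr_ae (startAE ℙ hprob hstart y (g₁ := fun ω => g (ω 0)) (g₂ := fun _ => g y) (hg.comp (measurable_pi_apply 0))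
    measurable_const (fun ω hω => by simp only [hω]))]
  simp


lemma condBound {X : Type} [MeasurableSpace X] (ℙ : X → Measure (ℕ → X))
    (hprob : ∀ x, IsProbabilityMeasure (ℙ x))
    (hstart : ∀ x, (ℙ x) {ω | ω 0 = x} = 1)
    (hM1 : ∀ (x : X) (G : (ℕ → X) → ℝ≥0∞), Measurable G →
      (∫⁻ ω, G (fun k => ω (k + 1)) ∂ℙ x) = ∫⁻ ω, (∫⁻ ω', G ω' ∂ℙ (ω 1)) ∂ℙ x)
    {V : X → ℝ} (hV : Measurable V)
    {c : ℝ≥0∞} (hc : c ≠ ⊤) {H : (ℕ → X) → ℝ≥0∞} (hH : Measurable H)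
    (hHb : ∀ z, ∫⁻ ω, H ω ∂ℙ z ≤ c * ENNReal.ofReal (V z)) :
    ∀ (n : ℕ) (y : X) (A : Set (ℕ → X)), MeasurableSet[natFiltration X n] A →
      (∫⁻ ω, A.indicator (fun ω' => H (shifted n ω')) ω ∂ℙ y)
        ≤ c * ∫⁻ ω, A.indicator (fun ω' => ENNReal.ofReal (V (ω' n))) ω ∂ℙ y := by
  intro n
  induction n with
  | zero =>
    intro y A hA
    haveI := hprob y
    have hAmeas : MeasurableSet A := natFiltration_le hA
    obtain ⟨S, hS, rfl⟩ := MeasurableSpace.measurableSet_comap.mp hA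
    by_cases hy : (fun _ : Fin 1 => y) ∈ S
    · have hmem : ∀ ω : ℕ → X, ω 0 = y →
          (ω ∈ (fun ω' (i : Fin 1) => ω' ↑i) ⁻¹' S) := by
        intro ω hω
        have hrω : (fun i : Fin 1 => ω ↑i) = fun _ : Fin 1 => y := funext fun i => by
          have hi : (i : ℕ) = 0 := Nat.lt_one_iff.mp i.isLt
          rw [hi, hω]
        show (fun i : Fin 1 => ω ↑i) ∈ S
        rw [hrω]; exact hy
      have e1 : ∫⁻ ω, ((fun ω' (i : Fin 1) => ω' ↑i) ⁻¹' S).indicator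
          (fun ω' => H (shifted 0 ω')) ω ∂ℙ y = ∫⁻ ω, H ω ∂ℙ y := by
        refine lintegral_congr_ae (startAE ℙ hprob hstart y
          (g₁ := fun ω => ((fun ω' (i : Fin 1) => ω' ↑i) ⁻¹' S).indicator
            (fun ω' => H (shifted 0 ω')) ω) (g₂ := H)
          (by exact (hH.comp (measurable_shifted 0)).indicator hAmeas) hH ?_)
        intro ω hω
        simp only [Set.indicator_of_mem (hmem ω hω), shifted_zero]
      have e2 : ∫⁻ ω, ((fun ω' (i : Fin 1) => ω' ↑i) ⁻¹' S).indicator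
          (fun ω' => ENNReal.ofReal (V (ω' 0))) ω ∂ℙ y = ENNReal.ofReal (V y) := by
        rw [lintegral_congr_ae (startAE ℙ hprob hstart y
          (g₁ := fun ω => ((fun ω' (i : Fin 1) => ω' ↑i) ⁻¹' S).indicator
            (fun ω' => ENNReal.ofReal (V (ω' 0))) ω)
          (g₂ := fun _ => ENNReal.ofReal (V y))
          (by exact (measurable_ofReal.comp (hV.comp (measurable_pi_apply 0))).indicator hAmeas)
          measurable_const ?_)]
        · simp
        · intro ω hω
          simp only [Set.indicator_of_mem (hmem ω hω), hω]
      rw [e1, e2]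
      exact hHb y
    · have hnmem : ∀ ω : ℕ → X, ω 0 = y →
          (ω ∉ (fun ω' (i : Fin 1) => ω' ↑i) ⁻¹' S) := by
        intro ω hω hin
        have hrω : (fun i : Fin 1 => ω ↑i) = fun _ : Fin 1 => y := funext fun i => by
          have hi : (i : ℕ) = 0 := Nat.lt_one_iff.mp i.isLt
          rw [hi, hω]
        exact hy (hrω ▸ hin)
      have e1 : ∫⁻ ω, ((fun ω' (i : Fin 1) => ω' ↑i) ⁻¹' S).indicator
          (fun ω' => H (shifted 0 ω')) ω ∂ℙ y = 0 := by
        rw [lintegral_congr_ae (startAE ℙ hprob hstart y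
          (g₁ := fun ω => ((fun ω' (i : Fin 1) => ω' ↑i) ⁻¹' S).indicator
            (fun ω' => H (shifted 0 ω')) ω) (g₂ := fun _ => 0)
          (by exact (hH.comp (measurable_shifted 0)).indicator hAmeas) measurable_const
          (fun ω hω => by simp only [Set.indicator_of_notMem (hnmem ω hω)]))]
        simp
      rw [e1]
      exact zero_le ..
  | succ n ih =>
    intro y A hA
    haveI := hprob y
    have hAmeas : MeasurableSet A := natFiltration_le hA
    obtain ⟨S, hS, rfl⟩ := MeasurableSpace.measurableSet_comap.mp hA
    set q : (Fin (n + 1) → X) → (Fin (n + 2) → X) := fun v => Fin.cases y v with hqdef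
    have hqm : Measurable q := by
      refine measurable_pi_lambda _ fun i => ?_
      induction i using Fin.cases with
      | zero => simpa [hqdef] using measurable_const
      | succ j => simpa [hqdef] using measurable_pi_apply (X := fun _ : Fin (n+1) => X) j
    set Sy : Set (Fin (n + 1) → X) := q ⁻¹' S with hSydef
    have hSym : MeasurableSet Sy := hqm hS
    set A' : Set (ℕ → X) := (fun ω' (i : Fin (n + 1)) => ω' ↑i) ⁻¹' Sy with hA'def
    have hA'filt : MeasurableSet[natFiltration X n] A' := ⟨Sy, hSym, rfl⟩
    have hA'meas : MeasurableSet A' := natFiltration_le hA'filt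
    set Ψ : (ℕ → X) → ℝ≥0∞ := fun ω' => A'.indicator (fun ω'' => H (shifted n ω'')) ω' with hΨdef
    set Φ : (ℕ → X) → ℝ≥0∞ :=
      fun ω' => A'.indicator (fun ω'' => ENNReal.ofReal (V (ω'' n))) ω' with hΦdef
    have hΨm : Measurable Ψ := (hH.comp (measurable_shifted n)).indicator hA'meas
    have hΦm : Measurable Φ :=
      (measurable_ofReal.comp (hV.comp (measurable_pi_apply n))).indicator hA'meas
    have key : ∀ ω : ℕ → X, ω 0 = y →
        ((ω ∈ (fun ω' (i : Fin (n + 2)) => ω' ↑i) ⁻¹' S) ↔ shifted 1 ω ∈ A') := by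
      intro ω hω
      have hrq : (fun i : Fin (n + 2) => ω ↑i)
          = q (fun i : Fin (n + 1) => (shifted 1 ω) ↑i) := by
        funext i
        induction i using Fin.cases with
        | zero => simpa [hqdef] using hω
        | succ j => simp [hqdef, shifted, Fin.val_succ, Nat.add_comm]
      constructor
      · intro h; show (fun i : Fin (n + 1) => (shifted 1 ω) ↑i) ∈ Sy
        show q _ ∈ S; rw [← hrq]; exact h
      · intro h
        show (fun i : Fin (n + 2) => ω ↑i) ∈ S
        rw [hrq]; exact h
    have agree1 : ∀ ω : ℕ → X, ω 0 = y →
        ((fun ω' (i : Fin (n + 2)) => ω' ↑i) ⁻¹' S).indicator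
          (fun ω' => H (shifted (n + 1) ω')) ω = Ψ (shifted 1 ω) := by
      intro ω hω
      have hval : H (shifted (n + 1) ω) = H (shifted n (shifted 1 ω)) := rfl
      by_cases hmem : ω ∈ (fun ω' (i : Fin (n + 2)) => ω' ↑i) ⁻¹' S
      · rw [Set.indicator_of_mem hmem]
        show _ = A'.indicator _ (shifted 1 ω)
        rw [Set.indicator_of_mem ((key ω hω).mp hmem)]
        exact hval
      · rw [Set.indicator_of_notMem hmem]
        show (0 : ℝ≥0∞) = A'.indicator _ (shifted 1 ω)
        rw [Set.indicator_of_notMem (fun h => hmem ((key ω hω).mpr h))]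
    have agree2 : ∀ ω : ℕ → X, ω 0 = y →
        Φ (shifted 1 ω) = ((fun ω' (i : Fin (n + 2)) => ω' ↑i) ⁻¹' S).indicator
          (fun ω' => ENNReal.ofReal (V (ω' (n + 1)))) ω := by
      intro ω hω
      by_cases hmem : ω ∈ (fun ω' (i : Fin (n + 2)) => ω' ↑i) ⁻¹' S
      · rw [Set.indicator_of_mem hmem]
        show A'.indicator _ (shifted 1 ω) = _
        rw [Set.indicator_of_mem ((key ω hω).mp hmem)]
        rfl
      · rw [Set.indicator_of_notMem hmem]
        show A'.indicator _ (shifted 1 ω) = (0 : ℝ≥0∞)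
        rw [Set.indicator_of_notMem (fun h => hmem ((key ω hω).mpr h))]
    calc ∫⁻ ω, ((fun ω' (i : Fin (n + 2)) => ω' ↑i) ⁻¹' S).indicator
          (fun ω' => H (shifted (n + 1) ω')) ω ∂ℙ y
        = ∫⁻ ω, Ψ (shifted 1 ω) ∂ℙ y :=
          lintegral_congr_ae (startAE ℙ hprob hstart y
            (g₁ := fun ω => ((fun ω' (i : Fin (n + 2)) => ω' ↑i) ⁻¹' S).indicator
              (fun ω' => H (shifted (n + 1) ω')) ω)
            (g₂ := fun ω => Ψ (shifted 1 ω))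
            (by exact (hH.comp (measurable_shifted (n + 1))).indicator hAmeas)
            (by exact hΨm.comp (measurable_shifted 1)) agree1)
      _ = ∫⁻ ω, (∫⁻ ω', Ψ ω' ∂ℙ (ω 1)) ∂ℙ y := hM1 y Ψ hΨm
      _ ≤ ∫⁻ ω, c * (∫⁻ ω', Φ ω' ∂ℙ (ω 1)) ∂ℙ y :=
          lintegral_mono fun ω => ih (ω 1) A' hA'filt
      _ = c * ∫⁻ ω, (∫⁻ ω', Φ ω' ∂ℙ (ω 1)) ∂ℙ y := lintegral_const_mul' c _ hc
      _ = c * ∫⁻ ω, Φ (shifted 1 ω) ∂ℙ y :=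
          congrArg (c * ·) (hM1 y Φ hΦm).symm
      _ = c * ∫⁻ ω, ((fun ω' (i : Fin (n + 2)) => ω' ↑i) ⁻¹' S).indicator
            (fun ω' => ENNReal.ofReal (V (ω' (n + 1)))) ω ∂ℙ y :=
          congrArg (c * ·) (lintegral_congr_ae (startAE ℙ hprob hstart y
            (g₁ := fun ω => Φ (shifted 1 ω))
            (g₂ := fun ω => ((fun ω' (i : Fin (n + 2)) => ω' ↑i) ⁻¹' S).indicator
              (fun ω' => ENNReal.ofReal (V (ω' (n + 1)))) ω)
            (by exact hΦm.comp (measurable_shifted 1))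
            (by exact (measurable_ofReal.comp (hV.comp (measurable_pi_apply (n + 1)))).indicator hAmeas)
            agree2))

lemma measurable_tauApply {X : Type} [MeasurableSpace X] {τ : (ℕ → X) → ℕ}
    (hτ : Measurable τ) {g : ℕ → (ℕ → X) → ℝ≥0∞} (hg : ∀ n, Measurable (g n)) :
    Measurable (fun ω => g (τ ω) ω) := by
  have he : (fun ω => g (τ ω) ω)
      = fun ω => ∑' n, ({ω' : ℕ → X | τ ω' = n}).indicator (g n) ω := by
    funext ω
    rw [tsum_eq_single (f := fun n => ({ω' : ℕ → X | τ ω' = n}).indicator (g n) ω) (τ ω)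
        (fun n hn => Set.indicator_of_notMem
          (show ω ∉ {ω' : ℕ → X | τ ω' = n} from fun h => hn h.symm) _),
      Set.indicator_of_mem (show ω ∈ {ω' : ℕ → X | τ ω' = τ ω} from rfl)]
  rw [he]
  exact Measurable.ennreal_tsum fun n => (hg n).indicator (hτ (measurableSet_singleton n))

lemma tauBound {X : Type} [MeasurableSpace X] (ℙ : X → Measure (ℕ → X))
    (hprob : ∀ x, IsProbabilityMeasure (ℙ x))
    (hstart : ∀ x, (ℙ x) {ω | ω 0 = x} = 1)
    (hM1 : ∀ (x : X) (G : (ℕ → X) → ℝ≥0∞), Measurable G →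
      (∫⁻ ω, G (fun k => ω (k + 1)) ∂ℙ x) = ∫⁻ ω, (∫⁻ ω', G ω' ∂ℙ (ω 1)) ∂ℙ x)
    {V : X → ℝ} (hV : Measurable V)
    {c : ℝ≥0∞} (hc : c ≠ ⊤) {H : (ℕ → X) → ℝ≥0∞} (hH : Measurable H)
    (hHb : ∀ z, ∫⁻ ω, H ω ∂ℙ z ≤ c * ENNReal.ofReal (V z))
    (τ : (ℕ → X) → ℕ) (hτstop : ∀ n, MeasurableSet[natFiltration X n] {ω | τ ω = n})
    (y : X) :
    ∫⁻ ω, H (shifted (τ ω) ω) ∂ℙ y ≤ c * ∫⁻ ω, ENNReal.ofReal (V (ω (τ ω))) ∂ℙ y := by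
  have hτn : ∀ n, MeasurableSet {ω : ℕ → X | τ ω = n} := fun n => natFiltration_le (hτstop n)
  have e1 : ∀ ω : ℕ → X, H (shifted (τ ω) ω)
      = ∑' n, ({ω' : ℕ → X | τ ω' = n}).indicator (fun ω' => H (shifted n ω')) ω := by
    intro ω
    rw [tsum_eq_single (f := fun n => ({ω' : ℕ → X | τ ω' = n}).indicator
          (fun ω' => H (shifted n ω')) ω) (τ ω)
        (fun n hn => Set.indicator_of_notMem
          (show ω ∉ {ω' : ℕ → X | τ ω' = n} from fun h => hn h.symm) _),
      Set.indicator_of_mem (show ω ∈ {ω' : ℕ → X | τ ω' = τ ω} from rfl)]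
  have e2 : ∀ ω : ℕ → X, ENNReal.ofReal (V (ω (τ ω)))
      = ∑' n, ({ω' : ℕ → X | τ ω' = n}).indicator
          (fun ω' => ENNReal.ofReal (V (ω' n))) ω := by
    intro ω
    rw [tsum_eq_single (f := fun n => ({ω' : ℕ → X | τ ω' = n}).indicator
          (fun ω' => ENNReal.ofReal (V (ω' n))) ω) (τ ω)
        (fun n hn => Set.indicator_of_notMem
          (show ω ∉ {ω' : ℕ → X | τ ω' = n} from fun h => hn h.symm) _),
      Set.indicator_of_mem (show ω ∈ {ω' : ℕ → X | τ ω' = τ ω} from rfl)]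
  calc ∫⁻ ω, H (shifted (τ ω) ω) ∂ℙ y
      = ∫⁻ ω, ∑' n, ({ω' : ℕ → X | τ ω' = n}).indicator
          (fun ω' => H (shifted n ω')) ω ∂ℙ y := lintegral_congr e1
    _ = ∑' n, ∫⁻ ω, ({ω' : ℕ → X | τ ω' = n}).indicator
          (fun ω' => H (shifted n ω')) ω ∂ℙ y :=
        lintegral_tsum fun n => by
          exact ((hH.comp (measurable_shifted n)).indicator (hτn n)).aemeasurable
    _ ≤ ∑' n, c * ∫⁻ ω, ({ω' : ℕ → X | τ ω' = n}).indicator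
          (fun ω' => ENNReal.ofReal (V (ω' n))) ω ∂ℙ y :=
        ENNReal.tsum_le_tsum fun n => condBound ℙ hprob hstart hM1 hV hc hH hHb n y _ (hτstop n)
    _ = c * ∑' n, ∫⁻ ω, ({ω' : ℕ → X | τ ω' = n}).indicator
          (fun ω' => ENNReal.ofReal (V (ω' n))) ω ∂ℙ y := ENNReal.tsum_mul_left
    _ = c * ∫⁻ ω, ∑' n, ({ω' : ℕ → X | τ ω' = n}).indicator
          (fun ω' => ENNReal.ofReal (V (ω' n))) ω ∂ℙ y :=
        congrArg (c * ·) (lintegral_tsum fun n => by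
          exact ((measurable_ofReal.comp
            (hV.comp (measurable_pi_apply n))).indicator (hτn n)).aemeasurable).symm
    _ = c * ∫⁻ ω, ENNReal.ofReal (V (ω (τ ω))) ∂ℙ y :=
        congrArg (c * ·) (lintegral_congr fun ω => (e2 ω).symm)

lemma GNbound {X : Type} [MeasurableSpace X] (ℙ : X → Measure (ℕ → X))
    (hprob : ∀ x, IsProbabilityMeasure (ℙ x))
    (hstart : ∀ x, (ℙ x) {ω | ω 0 = x} = 1)
    (hM1 : ∀ (x : X) (G : (ℕ → X) → ℝ≥0∞), Measurable G →
      (∫⁻ ω, G (fun k => ω (k + 1)) ∂ℙ x) = ∫⁻ ω, (∫⁻ ω', G ω' ∂ℙ (ω 1)) ∂ℙ x)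
    {f V : X → ℝ} (hf : Measurable f) (hV : Measurable V)
    (hf1 : ∀ y, 1 ≤ f y) (hV1 : ∀ y, 1 ≤ V y)
    {ε : ℝ} (hε0 : 0 < ε) (hε1 : ε < 1)
    {C : Set X} (hC : MeasurableSet C)
    {B : ℝ} (hB : ∀ y ∈ C, f y / V y ≤ B)
    (τ : (ℕ → X) → ℕ) (hτ1 : ∀ ω, 1 ≤ τ ω)
    (hτstop : ∀ n, MeasurableSet[natFiltration X n] {ω | τ ω = n})
    (hdrift1 : ∀ x ∉ C,
      (∫⁻ ω, ∑ k ∈ Finset.range (τ ω), ENNReal.ofReal (f (ω k)) ∂ℙ x)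
        ≤ ENNReal.ofReal (V x))
    (hdrift2 : ∀ x ∉ C,
      (∫⁻ ω, ENNReal.ofReal (V (ω (τ ω))) ∂ℙ x) ≤ ENNReal.ofReal ((1 - ε) * V x)) :
    ∀ (N : ℕ) (y : X), ∫⁻ ω, GN f C N ω ∂ℙ y
      ≤ (ENNReal.ofReal B + ENNReal.ofReal ε⁻¹) * ENNReal.ofReal (V y) := by
  set c : ℝ≥0∞ := ENNReal.ofReal B + ENNReal.ofReal ε⁻¹ with hcdef
  have hc : c ≠ ⊤ := by simp [hcdef]
  have hτmeas : Measurable τ :=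
    measurable_to_countable fun ω => natFiltration_le (hτstop (τ ω))
  intro N
  induction N with
  | zero =>
    intro y
    have h0 : ∀ ω : ℕ → X, GN f C 0 ω = 0 := fun ω => by simp [GN]
    rw [lintegral_congr h0, lintegral_zero]
    exact zero_le ..
  | succ N ih =>
    intro y
    haveI := hprob y
    by_cases hy : y ∈ C
    · rw [lintegral_congr_ae (startAE ℙ hprob hstart y
        (g₂ := fun _ => ENNReal.ofReal (f y))
        (measurable_GN hf hC (N + 1)) measurable_const (GN_start_mem hy N))]
      rw [lintegral_const, measure_univ, mul_one]
      have hV0 : (0 : ℝ) < V y := lt_of_lt_of_le one_pos (hV1 y)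
      have hB0 : (0 : ℝ) ≤ B :=
        le_trans (div_nonneg (le_trans zero_le_one (hf1 y)) hV0.le) (hB y hy)
      have hfB : f y ≤ B * V y := (div_le_iff₀ hV0).mp (hB y hy)
      calc ENNReal.ofReal (f y) ≤ ENNReal.ofReal (B * V y) := ENNReal.ofReal_le_ofReal hfB
      _ = ENNReal.ofReal B * ENNReal.ofReal (V y) := ENNReal.ofReal_mul hB0
      _ ≤ c * ENNReal.ofReal (V y) := mul_le_mul_left le_self_add _
    · have hφ1m : Measurable fun ω : ℕ → X =>
          ∑ k ∈ Finset.range (τ ω), ENNReal.ofReal (f (ω k)) :=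
        measurable_tauApply hτmeas fun n =>
          Finset.measurable_sum _ fun k _ => measurable_ofReal.comp (hf.comp (measurable_pi_apply k))
      have h1 : ENNReal.ofReal ((1 - ε) * V y)
          = ENNReal.ofReal (1 - ε) * ENNReal.ofReal (V y) := ENNReal.ofReal_mul (by linarith)
      have h2 : (1 : ℝ≥0∞) ≤ c * ENNReal.ofReal ε := by
        have hinv : ENNReal.ofReal ε⁻¹ * ENNReal.ofReal ε = 1 := by
          rw [← ENNReal.ofReal_mul (le_of_lt (inv_pos.mpr hε0)),
            inv_mul_cancel₀ (ne_of_gt hε0), ENNReal.ofReal_one]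
        calc (1 : ℝ≥0∞) = ENNReal.ofReal ε⁻¹ * ENNReal.ofReal ε := hinv.symm
        _ ≤ c * ENNReal.ofReal ε := mul_le_mul_left le_add_self _
      have h3 : 1 + c * ENNReal.ofReal (1 - ε) ≤ c := by
        have hsum : c * ENNReal.ofReal ε + c * ENNReal.ofReal (1 - ε) = c := by
          rw [← mul_add, ← ENNReal.ofReal_add hε0.le (by linarith),
            show ε + (1 - ε) = 1 by ring, ENNReal.ofReal_one, mul_one]
        calc 1 + c * ENNReal.ofReal (1 - ε)
            ≤ c * ENNReal.ofReal ε + c * ENNReal.ofReal (1 - ε) := add_le_add_left h2 _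
        _ = c := hsum
      calc ∫⁻ ω, GN f C (N + 1) ω ∂ℙ y
          ≤ ∫⁻ ω, ((∑ k ∈ Finset.range (τ ω), ENNReal.ofReal (f (ω k)))
              + GN f C N (shifted (τ ω) ω)) ∂ℙ y :=
            lintegral_mono fun ω => GN_split (τ ω) N (hτ1 ω) ω
        _ = (∫⁻ ω, ∑ k ∈ Finset.range (τ ω), ENNReal.ofReal (f (ω k)) ∂ℙ y)
              + ∫⁻ ω, GN f C N (shifted (τ ω) ω) ∂ℙ y := lintegral_add_left hφ1m _
        _ ≤ ENNReal.ofReal (V y) + c * ENNReal.ofReal ((1 - ε) * V y) :=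
            add_le_add (hdrift1 y hy)
              (le_trans (tauBound ℙ hprob hstart hM1 hV hc (measurable_GN hf hC N) ih τ hτstop y)
                (mul_le_mul_right (hdrift2 y hy) c))
        _ ≤ c * ENNReal.ofReal (V y) := by
            rw [h1, ← mul_assoc]
            calc ENNReal.ofReal (V y) + c * ENNReal.ofReal (1 - ε) * ENNReal.ofReal (V y)
                = (1 + c * ENNReal.ofReal (1 - ε)) * ENNReal.ofReal (V y) := by ring
            _ ≤ c * ENNReal.ofReal (V y) := mul_le_mul_left h3 _

lemma Gfun_bound {X : Type} [MeasurableSpace X] (ℙ : X → Measure (ℕ → X))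
    (hprob : ∀ x, IsProbabilityMeasure (ℙ x))
    (hstart : ∀ x, (ℙ x) {ω | ω 0 = x} = 1)
    (hM1 : ∀ (x : X) (G : (ℕ → X) → ℝ≥0∞), Measurable G →
      (∫⁻ ω, G (fun k => ω (k + 1)) ∂ℙ x) = ∫⁻ ω, (∫⁻ ω', G ω' ∂ℙ (ω 1)) ∂ℙ x)
    {f V : X → ℝ} (hf : Measurable f) (hV : Measurable V)
    (hf1 : ∀ y, 1 ≤ f y) (hV1 : ∀ y, 1 ≤ V y)
    {ε : ℝ} (hε0 : 0 < ε) (hε1 : ε < 1)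
    {C : Set X} (hC : MeasurableSet C)
    {B : ℝ} (hB : ∀ y ∈ C, f y / V y ≤ B)
    (τ : (ℕ → X) → ℕ) (hτ1 : ∀ ω, 1 ≤ τ ω)
    (hτstop : ∀ n, MeasurableSet[natFiltration X n] {ω | τ ω = n})
    (hdrift1 : ∀ x ∉ C,
      (∫⁻ ω, ∑ k ∈ Finset.range (τ ω), ENNReal.ofReal (f (ω k)) ∂ℙ x)
        ≤ ENNReal.ofReal (V x))
    (hdrift2 : ∀ x ∉ C,
      (∫⁻ ω, ENNReal.ofReal (V (ω (τ ω))) ∂ℙ x) ≤ ENNReal.ofReal ((1 - ε) * V x))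
    (y : X) :
    ∫⁻ ω, Gfun f C ω ∂ℙ y
      ≤ (ENNReal.ofReal B + ENNReal.ofReal ε⁻¹) * ENNReal.ofReal (V y) := by
  calc ∫⁻ ω, Gfun f C ω ∂ℙ y = ⨆ N, ∫⁻ ω, GN f C N ω ∂ℙ y := by
        rw [← lintegral_iSup (fun N => measurable_GN hf hC N) monotone_GN]
        exact lintegral_congr fun ω => Gfun_eq_iSup ω
  _ ≤ _ := iSup_le fun N => GNbound ℙ hprob hstart hM1 hf hV hf1 hV1 hε0 hε1 hC hB
      τ hτ1 hτstop hdrift1 hdrift2 N y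


/-- Under the hypotheses of the state-dependent drift proposition, if additionally
`sup_{x∈C} {f(x) + E_x[V(Φ_1)]} < ∞`, then `sup_{x∈C} E_x[Σ_{k=0}^{τ_C} f(Φ_k)] < ∞`. -/
theorem stmt7
    (X : Type) [MeasurableSpace X]
    (ℙ : X → Measure (ℕ → X)) (hprob : ∀ x, IsProbabilityMeasure (ℙ x))
    (hstart : ∀ x, (ℙ x) {ω | ω 0 = x} = 1)
    (hMarkov : ∀ (x : X) (n : ℕ) (G : (ℕ → X) → ℝ≥0∞), Measurable G →
      (∫⁻ ω, G (fun k => ω (k + n)) ∂ℙ x)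
        = ∫⁻ ω, (∫⁻ ω', G ω' ∂ℙ (ω n)) ∂ℙ x)
    (f V : X → ℝ) (hf : Measurable f) (hV : Measurable V)
    (hf1 : ∀ y, 1 ≤ f y) (hV1 : ∀ y, 1 ≤ V y)
    (ε : ℝ) (hε0 : 0 < ε) (hε1 : ε < 1)
    (C : Set X) (hC : MeasurableSet C)
    (B : ℝ) (hB : ∀ y ∈ C, f y / V y ≤ B)
    (τ : (ℕ → X) → ℕ) (hτ1 : ∀ ω, 1 ≤ τ ω)
    (hτstop : ∀ n, MeasurableSet[natFiltration X n] {ω | τ ω = n})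
    (hdrift1 : ∀ x ∉ C,
      (∫⁻ ω, ∑ k ∈ Finset.range (τ ω), ENNReal.ofReal (f (ω k)) ∂ℙ x)
        ≤ ENNReal.ofReal (V x))
    (hdrift2 : ∀ x ∉ C,
      (∫⁻ ω, ENNReal.ofReal (V (ω (τ ω))) ∂ℙ x) ≤ ENNReal.ofReal ((1 - ε) * V x))
    (hbound : ∃ B₂ : ℝ, ∀ x ∈ C,
      ENNReal.ofReal (f x) + (∫⁻ ω, ENNReal.ofReal (V (ω 1)) ∂ℙ x)
        ≤ ENNReal.ofReal B₂) :
    ∃ D : ℝ≥0∞, D < ⊤ ∧ ∀ x ∈ C,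
      (∫⁻ ω, ∑' k : ℕ,
          Set.indicator {k' : ℕ | ∀ j, 1 ≤ j → j < k' → ω j ∉ C}
            (fun k' => ENNReal.ofReal (f (ω k'))) k ∂ℙ x)
        ≤ D := by
  obtain ⟨B₂, hB₂⟩ := hbound
  have hM1 : ∀ (x : X) (G : (ℕ → X) → ℝ≥0∞), Measurable G →
      (∫⁻ ω, G (fun k => ω (k + 1)) ∂ℙ x) = ∫⁻ ω, (∫⁻ ω', G ω' ∂ℙ (ω 1)) ∂ℙ x :=
    fun x G hG => hMarkov x 1 G hG
  set c : ℝ≥0∞ := ENNReal.ofReal B + ENNReal.ofReal ε⁻¹ with hcdef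
  have hc : c ≠ ⊤ := by simp [hcdef]
  refine ⟨(c + 1) * ENNReal.ofReal B₂, ?_, ?_⟩
  · refine ENNReal.mul_lt_top ?_ ?_
    · simp [hcdef]
    · simp
  intro x hx
  haveI := hprob x
  have hGfm : Measurable (Gfun f C) := measurable_Gfun hf hC
  have hpt : ∀ ω : ℕ → X,
      (∑' k : ℕ, Set.indicator {k' : ℕ | ∀ j, 1 ≤ j → j < k' → ω j ∉ C}
        (fun k' => ENNReal.ofReal (f (ω k'))) k)
      = ENNReal.ofReal (f (ω 0)) + Gfun f C (fun k => ω (k + 1)) := by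
    intro ω
    rw [tsum_eq_zero_add' ENNReal.summable]
    congr 1
    · exact Set.indicator_of_mem
        (show (0 : ℕ) ∈ {k' : ℕ | ∀ j, 1 ≤ j → j < k' → ω j ∉ C} from
          fun j _ hj0 => absurd hj0 (Nat.not_lt_zero j)) _
    · refine tsum_congr fun k => ?_
      show Set.indicator {k' : ℕ | ∀ j, 1 ≤ j → j < k' → ω j ∉ C}
          (fun k' => ENNReal.ofReal (f (ω k'))) (k + 1) = trm f C k (fun k => ω (k + 1))
      unfold trm
      by_cases h : ∀ j < k, ω (j + 1) ∉ C
      · rw [Set.indicator_of_mem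
          (show (k + 1) ∈ {k' : ℕ | ∀ j, 1 ≤ j → j < k' → ω j ∉ C} from by
            intro j h1 hjk1
            obtain ⟨j', rfl⟩ : ∃ j', j = j' + 1 := ⟨j - 1, by omega⟩
            exact h j' (by omega)),
          Set.indicator_of_mem
            (show (fun k => ω (k + 1)) ∈ {ω' : ℕ → X | ∀ j < k, ω' j ∉ C} from h)]
      · rw [Set.indicator_of_notMem
          (show (k + 1) ∉ {k' : ℕ | ∀ j, 1 ≤ j → j < k' → ω j ∉ C} from
            fun hmem => h fun j hj => hmem (j + 1) (by omega) (by omega)),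
          Set.indicator_of_notMem
            (show (fun k => ω (k + 1)) ∉ {ω' : ℕ → X | ∀ j < k, ω' j ∉ C} from h)]
  calc ∫⁻ ω, (∑' k : ℕ, Set.indicator {k' : ℕ | ∀ j, 1 ≤ j → j < k' → ω j ∉ C}
        (fun k' => ENNReal.ofReal (f (ω k'))) k) ∂ℙ x
      = ∫⁻ ω, (ENNReal.ofReal (f (ω 0)) + Gfun f C (fun k => ω (k + 1))) ∂ℙ x :=
        lintegral_congr hpt
    _ = (∫⁻ ω, ENNReal.ofReal (f (ω 0)) ∂ℙ x)
          + ∫⁻ ω, Gfun f C (fun k => ω (k + 1)) ∂ℙ x :=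
        lintegral_add_left (by exact measurable_ofReal.comp (hf.comp (measurable_pi_apply 0))) _
    _ = ENNReal.ofReal (f x) + ∫⁻ ω, Gfun f C (fun k => ω (k + 1)) ∂ℙ x := by
        rw [lintegral_start ℙ hprob hstart x (g := fun z => ENNReal.ofReal (f z)) (by exact measurable_ofReal.comp hf)]
    _ = ENNReal.ofReal (f x) + ∫⁻ ω, (∫⁻ ω', Gfun f C ω' ∂ℙ (ω 1)) ∂ℙ x := by
        rw [hM1 x (Gfun f C) hGfm]
    _ ≤ ENNReal.ofReal (f x) + ∫⁻ ω, c * ENNReal.ofReal (V (ω 1)) ∂ℙ x :=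
        add_le_add_right (lintegral_mono fun (ω : ℕ → X) =>
          Gfun_bound ℙ hprob hstart hM1 hf hV hf1 hV1 hε0 hε1 hC hB τ hτ1 hτstop
            hdrift1 hdrift2 (ω 1)) _
    _ = ENNReal.ofReal (f x) + c * ∫⁻ ω, ENNReal.ofReal (V (ω 1)) ∂ℙ x := by
        rw [lintegral_const_mul' c _ hc]
    _ ≤ (c + 1) * (ENNReal.ofReal (f x) + ∫⁻ ω, ENNReal.ofReal (V (ω 1)) ∂ℙ x) := by
        rw [mul_add]
        exact add_le_add (le_mul_of_one_le_left' le_add_self) (mul_le_mul_left le_self_add _)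
    _ ≤ (c + 1) * ENNReal.ofReal B₂ := mul_le_mul_right (hB₂ x hx) _
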